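/- Let π ∈ ℤ[i] be an irreducible element with π·π̄ = p an odd rational prime. Then for every integer n ∈ ℤ, the Gaussian quadratic residue symbol [n/π] equals the Legendre symbol (n/p). -/

import Mathlib

/-- The quadratic residue symbol `[α/π]` for an irreducible odd Gaussian `π`:
`0` if `π ∣ α`, `1` if `α` is a nonzero square mod `π`, `-1` otherwise. -/
noncomputable def gQR (α π : GaussianInt) : ℤ := by
  classical
  exact if π ∣ α then 0 else if ∃ β : GaussianInt, π ∣ (β ^ 2 - α) then 1 else -1

/-- The quadratic residue symbol `[α/β]`, extended multiplicatively in the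
denominator over a factorization of `β` into irreducibles. -/
noncomputable def gSym (α β : GaussianInt) : ℤ :=
  ((UniqueFactorizationMonoid.factors β).map fun π => gQR α π).prod

/-- Complex conjugation on Gaussian integers. -/
def gconj (z : GaussianInt) : GaussianInt := ⟨z.re, -z.im⟩

/-- If `π ∈ ℤ[i]` is irreducible with `π·π̄ = p` an odd rational prime, then
for every `n ∈ ℤ` the Gaussian quadratic residue symbol `[n/π]` equals the
Legendre symbol `(n/p)`. -/
theorem stmt10 (p : ℕ) (hp : p.Prime) (hp2 : p ≠ 2) (π : GaussianInt)
    (hirr : Irreducible π) (hpi : π * gconj π = (p : GaussianInt)) :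
    ∀ n : ℤ, gQR (n : GaussianInt) π = @legendreSym p ⟨hp⟩ n := by
  haveI : Fact p.Prime := ⟨hp⟩
  intro n
  set a := π.re with ha'
  set b := π.im with hb'
  have hppos : (0:ℤ) < (p:ℤ) := by exact_mod_cast hp.pos
  have hpZ : Prime (p : ℤ) := Nat.prime_iff_prime_int.mp hp
  have hsum : (p : ℤ) = a * a + b * b := by
    have h := congrArg Zsqrtd.re hpi
    simp only [Zsqrtd.re_mul, Zsqrtd.re_natCast] at h
    have hgre : (gconj π).re = a := rfl
    have hgim : (gconj π).im = -b := rfl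
    rw [hgre, hgim] at h
    rw [← h]; ring
  have hb0 : ¬ (p:ℤ) ∣ b := by
    intro hb
    have haa : (p:ℤ) ∣ a * a := by
      have h : a * a = (p:ℤ) - b * b := by linarith
      rw [h]; exact dvd_sub (dvd_refl _) (hb.mul_left b)
    have hadvd : (p:ℤ) ∣ a := hpZ.dvd_of_dvd_pow (n := 2) (by rwa [sq])
    have hpp : (p:ℤ) * (p:ℤ) ∣ (p:ℤ) := by
      have h2 : (p:ℤ) * (p:ℤ) ∣ a * a + b * b :=
        dvd_add (mul_dvd_mul hadvd hadvd) (mul_dvd_mul hb hb)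
      rwa [← hsum] at h2
    have h1 : (p:ℤ) ∣ 1 :=
      (mul_dvd_mul_iff_left (a := (p:ℤ)) (ne_of_gt hppos)).mp (by simpa using hpp)
    have h2 := Int.le_of_dvd one_pos h1
    have h3 := hp.two_le
    omega
  have hπp : π ∣ (p : GaussianInt) := ⟨gconj π, hpi.symm⟩
  have hconj0 : gconj π ≠ 0 := by
    intro h
    rw [h, mul_zero] at hpi
    have h2 : ((p:ℤ) : GaussianInt) = 0 := by exact_mod_cast hpi.symm
    rw [Int.cast_eq_zero] at h2
    omega
  have hkey : ∀ z : GaussianInt, π ∣ z ↔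
      ((p:ℤ) ∣ (z.re * a + z.im * b) ∧ (p:ℤ) ∣ (z.im * a - z.re * b)) := by
    intro z
    rw [← mul_dvd_mul_iff_right hconj0, hpi]
    have hcast : (p : GaussianInt) = ((p:ℤ) : GaussianInt) := by push_cast; ring
    rw [hcast, Zsqrtd.intCast_dvd]
    have hgre : (gconj π).re = a := rfl
    have hgim : (gconj π).im = -b := rfl
    have hre : (z * gconj π).re = z.re * a + z.im * b := by
      simp only [Zsqrtd.re_mul, hgre, hgim]; ring
    have him : (z * gconj π).im = z.im * a - z.re * b := by
      simp only [Zsqrtd.im_mul, hgre, hgim]; ring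
    rw [hre, him]
  have hintdvd : ∀ m : ℤ, π ∣ (m : GaussianInt) ↔ (p:ℤ) ∣ m := by
    intro m
    constructor
    · intro h
      rw [hkey] at h
      obtain ⟨-, h2⟩ := h
      simp only [Zsqrtd.re_intCast, Zsqrtd.im_intCast, zero_mul, zero_sub] at h2
      have h3 : (p:ℤ) ∣ m * b := dvd_neg.mp h2
      rcases hpZ.dvd_mul.mp h3 with h | h
      · exact h
      · exact absurd h hb0
    · intro h
      refine dvd_trans hπp ?_
      have h2 : ((p:ℤ) : GaussianInt) ∣ ((m:ℤ) : GaussianInt) :=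
        (Zsqrtd.intCast_dvd_intCast _ _).mpr h
      simpa using h2
  by_cases hdvd : (p:ℤ) ∣ n
  · have h1 : π ∣ ((n:ℤ) : GaussianInt) := (hintdvd n).mpr hdvd
    have h2 : legendreSym p n = 0 :=
      (legendreSym.eq_zero_iff p n).mpr ((ZMod.intCast_zmod_eq_zero_iff_dvd n p).mpr hdvd)
    unfold gQR
    rw [if_pos h1, h2]
  · have hn0 : (n : ZMod p) ≠ 0 := fun h => hdvd ((ZMod.intCast_zmod_eq_zero_iff_dvd n p).mp h)
    have hnπ : ¬ π ∣ ((n:ℤ) : GaussianInt) := fun h => hdvd ((hintdvd n).mp h)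
    have hBne : ((b:ℤ) : ZMod p) ≠ 0 := fun h => hb0 ((ZMod.intCast_zmod_eq_zero_iff_dvd b p).mp h)
    have hAB : ((a:ℤ) : ZMod p) * ((a:ℤ) : ZMod p) + ((b:ℤ) : ZMod p) * ((b:ℤ) : ZMod p) = 0 := by
      have h : (((a*a + b*b : ℤ)) : ZMod p) = 0 := by
        rw [← hsum]; simp
      push_cast at h
      exact h
    have hsq_iff : (∃ β : GaussianInt, π ∣ (β ^ 2 - ((n:ℤ) : GaussianInt))) ↔
        IsSquare ((n:ℤ) : ZMod p) := by
      constructor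
      · rintro ⟨β, hβ⟩
        set x := β.re with hx'
        set y := β.im with hy'
        have hre : (β ^ 2 - ((n:ℤ) : GaussianInt)).re = x * x - y * y - n := by
          simp only [pow_two, Zsqrtd.re_sub, Zsqrtd.re_mul, Zsqrtd.re_intCast]
          ring
        have him : (β ^ 2 - ((n:ℤ) : GaussianInt)).im = x * y + y * x := by
          simp only [pow_two, Zsqrtd.im_sub, Zsqrtd.im_mul, Zsqrtd.im_intCast]
          ring
        rw [hkey] at hβ
        obtain ⟨-, h2⟩ := hβ
        rw [hre, him] at h2
        have hz : (((x*y + y*x) * a - (x*x - y*y - n) * b : ℤ) : ZMod p) = 0 :=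
          (ZMod.intCast_zmod_eq_zero_iff_dvd _ p).mpr h2
        push_cast at hz
        set A := ((a:ℤ) : ZMod p)
        set B := ((b:ℤ) : ZMod p)
        set X := ((x:ℤ) : ZMod p)
        set Y := ((y:ℤ) : ZMod p)
        have key : ((n:ℤ) : ZMod p) * B ^ 2 = (X * B - A * Y) ^ 2 := by
          linear_combination (-(Y^2)) * hAB + B * hz
        refine ⟨(X * B - A * Y) * B⁻¹, ?_⟩
        field_simp
        linear_combination key
      · rintro ⟨r, hr⟩
        have hm : (p:ℤ) ∣ ((r.val : ℤ) * (r.val : ℤ) - n) := by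
          rw [← ZMod.intCast_zmod_eq_zero_iff_dvd]
          push_cast
          rw [ZMod.natCast_val, ZMod.cast_id, ← hr]
          ring
        refine ⟨(((r.val : ℤ)) : GaussianInt), ?_⟩
        have h3 : (((r.val : ℤ)) : GaussianInt) ^ 2 - ((n:ℤ) : GaussianInt)
            = ((((r.val : ℤ) * (r.val : ℤ) - n : ℤ)) : GaussianInt) := by
          push_cast; ring
        rw [h3]
        exact (hintdvd _).mpr hm
    unfold gQR
    rw [if_neg hnπ]
    by_cases hsq : IsSquare ((n:ℤ) : ZMod p)
    · rw [if_pos (hsq_iff.mpr hsq), (legendreSym.eq_one_iff p hn0).mpr hsq]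
    · rw [if_neg (fun h => hsq (hsq_iff.mp h)), (legendreSym.eq_neg_one_iff p).mpr hsq]
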